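/- Let d ≥ 1 and n ≥ 0 be integers, let 0 ≤ k ≤ d−1, let r ≥ 0, and let λ be a nonzero real number. Writing Q₂^{(k)}(t,x) := (∂^k/∂x^k) Q₂(t,x), we have lim_{t↓0} t^{d−1} · e^{−λ²/(4t)} · (∂ⁿ/∂rⁿ)[Q₂^{(k)}(t, cos(√t·r)·cosh λ)] = 0 if k < d−1, while if k = d−1 the limit equals 2·(λ/(2·sinh λ))^d · (∂ⁿ/∂rⁿ) e^{−r²·λ·coth(λ)/4}. (Note that for t sufficiently small, cos(√t·r)·cosh λ > 1, so the expression is defined.) -/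

import Mathlib

open Real Filter Set Topology

noncomputable section

/-- Inverse hyperbolic cosine on `[1, ∞)`. -/
def arccosh (x : ℝ) : ℝ := Real.log (x + Real.sqrt (x ^ 2 - 1))

/-- `Q₂(t,x) = (arccosh x/√(x²−1))·exp((arccosh x)²/(4t))`, for `x > 1`. -/
def Q2 (t x : ℝ) : ℝ :=
  (arccosh x / Real.sqrt (x ^ 2 - 1)) * Real.exp ((arccosh x) ^ 2 / (4 * t))

namespace S4

lemma sq_sub_pos {x : ℝ} (hx : 1 < x) : 0 < x ^ 2 - 1 := by nlinarith

lemma sqrt_pos' {x : ℝ} (hx : 1 < x) : 0 < Real.sqrt (x ^ 2 - 1) :=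
  Real.sqrt_pos.2 (sq_sub_pos hx)

lemma add_sqrt_pos {x : ℝ} (hx : 1 < x) : 0 < x + Real.sqrt (x ^ 2 - 1) := by
  have := Real.sqrt_nonneg (x ^ 2 - 1); linarith

lemma one_lt_add_sqrt {x : ℝ} (hx : 1 < x) : 1 < x + Real.sqrt (x ^ 2 - 1) := by
  have := Real.sqrt_nonneg (x ^ 2 - 1); linarith

lemma exp_arccosh {x : ℝ} (hx : 1 < x) : Real.exp (arccosh x) = x + Real.sqrt (x ^ 2 - 1) :=
  Real.exp_log (add_sqrt_pos hx)

lemma mul_conj {x : ℝ} (hx : 1 < x) :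
    (x + Real.sqrt (x ^ 2 - 1)) * (x - Real.sqrt (x ^ 2 - 1)) = 1 := by
  have h := Real.sq_sqrt (sq_sub_pos hx).le
  nlinarith [h]

lemma exp_neg_arccosh {x : ℝ} (hx : 1 < x) :
    Real.exp (-arccosh x) = x - Real.sqrt (x ^ 2 - 1) := by
  rw [Real.exp_neg, exp_arccosh hx]
  exact inv_eq_of_mul_eq_one_left (by have := mul_conj hx; linarith [mul_comm (x + Real.sqrt (x ^ 2 - 1)) (x - Real.sqrt (x ^ 2 - 1))])

lemma cosh_arccosh {x : ℝ} (hx : 1 < x) : Real.cosh (arccosh x) = x := by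
  rw [Real.cosh_eq, exp_arccosh hx, exp_neg_arccosh hx]; ring

lemma sinh_arccosh {x : ℝ} (hx : 1 < x) : Real.sinh (arccosh x) = Real.sqrt (x ^ 2 - 1) := by
  rw [Real.sinh_eq, exp_arccosh hx, exp_neg_arccosh hx]; ring

lemma arccosh_pos {x : ℝ} (hx : 1 < x) : 0 < arccosh x :=
  Real.log_pos (one_lt_add_sqrt hx)

lemma arccosh_cosh {y : ℝ} (hy : 0 ≤ y) : arccosh (Real.cosh y) = y := by
  unfold arccosh
  have h : Real.cosh y ^ 2 - 1 = Real.sinh y ^ 2 := by rw [Real.cosh_sq]; ring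
  rw [h, Real.sqrt_sq (Real.sinh_nonneg_iff.2 hy), Real.cosh_add_sinh, Real.log_exp]

lemma hasDerivAt_arccosh {x : ℝ} (hx : 1 < x) :
    HasDerivAt arccosh (Real.sqrt (x ^ 2 - 1))⁻¹ x := by
  have hs := sqrt_pos' hx
  have h1 : HasDerivAt (fun y : ℝ => y ^ 2 - 1) (2 * x) x := by
    simpa using (hasDerivAt_pow 2 x).sub_const 1
  have h2 : HasDerivAt (fun y : ℝ => Real.sqrt (y ^ 2 - 1))
      (1 / (2 * Real.sqrt (x ^ 2 - 1)) * (2 * x)) x :=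
    (Real.hasDerivAt_sqrt (sq_sub_pos hx).ne').comp x h1
  have h3 : HasDerivAt (fun y : ℝ => y + Real.sqrt (y ^ 2 - 1))
      (1 + 1 / (2 * Real.sqrt (x ^ 2 - 1)) * (2 * x)) x := (hasDerivAt_id x).add h2
  have h4 := h3.log (add_sqrt_pos hx).ne'
  convert h4 using 1
  · rfl
  have hxs := add_sqrt_pos hx
  field_simp
  nlinarith [Real.sq_sqrt (sq_sub_pos hx).le, hs]


lemma sqrt_eq_exp_log {u : ℝ} (hu : 0 < u) : Real.sqrt u = Real.exp (Real.log u / 2) := by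
  rw [Real.sqrt_eq_rpow, Real.rpow_def_of_pos hu]; ring_nf

/-- Complexified `arccosh`. -/
def Fc (z : ℂ) : ℂ := Complex.log (z + Complex.exp (Complex.log (z ^ 2 - 1) / 2))

lemma Fc_ofReal {y : ℝ} (hy : 1 < y) : Fc y = (arccosh y : ℂ) := by
  have h2 : 0 < y ^ 2 - 1 := sq_sub_pos hy
  have h1 : ((y : ℂ) ^ 2 - 1) = ((y ^ 2 - 1 : ℝ) : ℂ) := by push_cast; ring
  rw [Fc, h1, ← Complex.ofReal_log h2.le,
    show ((Real.log (y ^ 2 - 1) : ℝ) : ℂ) / 2 = ((Real.log (y ^ 2 - 1) / 2 : ℝ) : ℂ) by push_cast; ring,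
    ← Complex.ofReal_exp, ← sqrt_eq_exp_log h2,
    show (y : ℂ) + ((Real.sqrt (y ^ 2 - 1) : ℝ) : ℂ) = ((y + Real.sqrt (y ^ 2 - 1) : ℝ) : ℂ) by push_cast; ring,
    ← Complex.ofReal_log (add_sqrt_pos hy).le]
  rfl

lemma analyticAt_Fc {x : ℝ} (hx : 1 < x) : AnalyticAt ℂ Fc x := by
  rw [Complex.analyticAt_iff_eventually_differentiableAt]
  have hS : ∀ᶠ z in 𝓝 (x : ℂ), (z ^ 2 - 1) ∈ Complex.slitPlane ∧
      (z + Complex.exp (Complex.log (z ^ 2 - 1) / 2)) ∈ Complex.slitPlane := by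
    have hc1 : Continuous fun z : ℂ => z ^ 2 - 1 := by fun_prop
    have hS1 : IsOpen {z : ℂ | (z ^ 2 - 1) ∈ Complex.slitPlane} :=
      Complex.isOpen_slitPlane.preimage hc1
    have hcOn : ContinuousOn (fun z : ℂ => z + Complex.exp (Complex.log (z ^ 2 - 1) / 2))
        {z : ℂ | (z ^ 2 - 1) ∈ Complex.slitPlane} := by
      apply continuousOn_id.add
      apply Complex.continuous_exp.comp_continuousOn
      apply ContinuousOn.div_const
      exact hc1.continuousOn.clog (fun z hz => hz)
    have hS2 : IsOpen ({z : ℂ | (z ^ 2 - 1) ∈ Complex.slitPlane} ∩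
        (fun z : ℂ => z + Complex.exp (Complex.log (z ^ 2 - 1) / 2)) ⁻¹' Complex.slitPlane) :=
      hcOn.isOpen_inter_preimage hS1 Complex.isOpen_slitPlane
    have hmem : (x : ℂ) ∈ {z : ℂ | (z ^ 2 - 1) ∈ Complex.slitPlane} ∩
        (fun z : ℂ => z + Complex.exp (Complex.log (z ^ 2 - 1) / 2)) ⁻¹' Complex.slitPlane := by
      constructor
      · show ((x : ℂ) ^ 2 - 1) ∈ Complex.slitPlane
        rw [show ((x : ℂ) ^ 2 - 1) = ((x ^ 2 - 1 : ℝ) : ℂ) by push_cast; ring]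
        exact Complex.ofReal_mem_slitPlane.2 (sq_sub_pos hx)
      · show ((x : ℂ) + Complex.exp (Complex.log ((x:ℂ) ^ 2 - 1) / 2)) ∈ Complex.slitPlane
        rw [show ((x : ℂ) ^ 2 - 1) = ((x ^ 2 - 1 : ℝ) : ℂ) by push_cast; ring,
          ← Complex.ofReal_log (sq_sub_pos hx).le,
          show ((Real.log (x ^ 2 - 1) : ℝ) : ℂ) / 2 = ((Real.log (x ^ 2 - 1) / 2 : ℝ) : ℂ) by push_cast; ring,
          ← Complex.ofReal_exp,
          show (x : ℂ) + ((Real.exp (Real.log (x ^ 2 - 1) / 2) : ℝ) : ℂ)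
            = ((x + Real.exp (Real.log (x ^ 2 - 1) / 2) : ℝ) : ℂ) by push_cast; ring]
        apply Complex.ofReal_mem_slitPlane.2
        rw [← sqrt_eq_exp_log (sq_sub_pos hx)]
        exact add_sqrt_pos hx
    exact eventually_of_mem (hS2.mem_nhds hmem) (fun z hz => ⟨hz.1, hz.2⟩)
  filter_upwards [hS] with z hz
  have d1 : DifferentiableAt ℂ (fun z : ℂ => z ^ 2 - 1) z := by fun_prop
  have d2 : DifferentiableAt ℂ (fun z : ℂ => Complex.log (z ^ 2 - 1) / 2) z :=
    ((Complex.differentiableAt_log hz.1).comp z d1).div_const 2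
  have d3 : DifferentiableAt ℂ (fun z : ℂ => z + Complex.exp (Complex.log (z ^ 2 - 1) / 2)) z :=
    differentiableAt_id.add (Complex.differentiable_exp.differentiableAt.comp z d2)
  exact (Complex.differentiableAt_log hz.2).comp z d3

lemma analyticAt_arccosh {x : ℝ} (hx : 1 < x) : AnalyticAt ℝ arccosh x := by
  have h : AnalyticAt ℝ (fun y : ℝ => (Fc y).re) x := by
    have h1 : AnalyticAt ℝ (fun y : ℝ => Fc y) x :=
      ((analyticAt_Fc hx).restrictScalars).comp (Complex.ofRealCLM.analyticAt x)
    exact (Complex.reCLM.analyticAt _).comp h1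
  apply h.congr
  filter_upwards [eventually_gt_nhds hx] with y hy
  rw [Fc_ofReal hy, Complex.ofReal_re]

lemma analyticAt_rcos (θ : ℝ) : AnalyticAt ℝ Real.cos θ := by
  have h : AnalyticAt ℝ (fun y : ℝ => (Complex.cos y).re) θ :=
    (Complex.reCLM.analyticAt _).comp
      (((Complex.differentiable_cos.analyticAt _).restrictScalars).comp
        (Complex.ofRealCLM.analyticAt θ))
  apply h.congr
  filter_upwards with y
  rw [Complex.cos_ofReal_re]


variable {lam : ℝ}

/-- The set of `θ` where `cos θ * cosh lam > 1`. -/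
def W (lam : ℝ) : Set ℝ := {θ | 1 < Real.cos θ * Real.cosh lam}

lemma isOpen_W : IsOpen (W lam) := isOpen_lt continuous_const (by fun_prop)

lemma mem_W_zero (hlam : lam ≠ 0) : (0 : ℝ) ∈ W lam := by
  show 1 < Real.cos 0 * Real.cosh lam
  rw [Real.cos_zero, one_mul]
  exact Real.one_lt_cosh.2 hlam

/-- `aF lam θ = arccosh (cos θ * cosh lam)`. -/
def aF (lam θ : ℝ) : ℝ := arccosh (Real.cos θ * Real.cosh lam)

lemma aF_pos {θ : ℝ} (hθ : θ ∈ W lam) : 0 < aF lam θ := arccosh_pos hθ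

lemma aF_zero (hlam : lam ≠ 0) : aF lam 0 = |lam| := by
  unfold aF
  rw [Real.cos_zero, one_mul, ← Real.cosh_abs, arccosh_cosh (abs_nonneg lam)]

lemma sinh_aF_pos {θ : ℝ} (hθ : θ ∈ W lam) : 0 < Real.sinh (aF lam θ) :=
  Real.sinh_pos_iff.2 (aF_pos hθ)

lemma analyticAt_aF {θ : ℝ} (hθ : θ ∈ W lam) : AnalyticAt ℝ (aF lam) θ := by
  have h1 : AnalyticAt ℝ (fun θ : ℝ => Real.cos θ * Real.cosh lam) θ :=
    (analyticAt_rcos θ).mul analyticAt_const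
  exact AnalyticAt.comp (g := arccosh) (analyticAt_arccosh hθ) h1

lemma hasDerivAt_aF {θ : ℝ} (hθ : θ ∈ W lam) :
    HasDerivAt (aF lam)
      ((Real.sqrt ((Real.cos θ * Real.cosh lam) ^ 2 - 1))⁻¹ * (-Real.sin θ * Real.cosh lam)) θ := by
  have hinner : HasDerivAt (fun θ => Real.cos θ * Real.cosh lam) (-Real.sin θ * Real.cosh lam) θ :=
    (Real.hasDerivAt_cos θ).mul_const _
  exact (hasDerivAt_arccosh hθ).comp θ hinner

def gF (lam θ : ℝ) : ℝ := aF lam θ ^ 2 - lam ^ 2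
def gd (lam θ : ℝ) : ℝ :=
  -2 * Real.cosh lam * (Real.sin θ * (aF lam θ / Real.sinh (aF lam θ)))

lemma gF_zero (hlam : lam ≠ 0) : gF lam 0 = 0 := by
  simp [gF, aF_zero hlam, sq_abs]

lemma hasDerivAt_gF {θ : ℝ} (hθ : θ ∈ W lam) : HasDerivAt (gF lam) (gd lam θ) θ := by
  have h := ((hasDerivAt_aF hθ).pow 2).sub_const (lam ^ 2)
  apply h.congr_deriv
  have hs : Real.sqrt ((Real.cos θ * Real.cosh lam) ^ 2 - 1) = Real.sinh (aF lam θ) :=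
    (sinh_arccosh hθ).symm
  rw [hs, gd]
  push_cast
  rw [pow_one, div_eq_mul_inv]
  ring

lemma hasDerivAt_gd (hlam : lam ≠ 0) :
    HasDerivAt (gd lam) (-2 * Real.cosh lam * (|lam| / Real.sinh |lam|)) 0 := by
  have h0 : (0 : ℝ) ∈ W lam := mem_W_zero hlam
  have hφ : DifferentiableAt ℝ (fun θ => aF lam θ / Real.sinh (aF lam θ)) 0 := by
    have ha : DifferentiableAt ℝ (aF lam) 0 := (hasDerivAt_aF h0).differentiableAt
    exact ha.div (Real.differentiable_sinh.differentiableAt.comp 0 ha) (sinh_aF_pos h0).ne'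
  have h := ((Real.hasDerivAt_sin 0).mul hφ.hasDerivAt).const_mul (-2 * Real.cosh lam)
  apply h.congr_deriv
  simp [Real.cos_zero, Real.sin_zero, aF_zero hlam]

lemma gd_ne : lam ≠ 0 → -2 * Real.cosh lam * (|lam| / Real.sinh |lam|) ≠ 0 := by
  intro hlam
  have h1 : (0:ℝ) < Real.cosh lam := Real.cosh_pos lam
  have h2 : 0 < |lam| := abs_pos.2 hlam
  have h3 : 0 < Real.sinh |lam| := Real.sinh_pos_iff.2 h2
  have : 0 < 2 * Real.cosh lam * (|lam| / Real.sinh |lam|) := by positivity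
  nlinarith

lemma abs_div_sinh : |lam| / Real.sinh |lam| = lam / Real.sinh lam := by
  rcases lt_trichotomy lam 0 with h | h | h
  · rw [abs_of_neg h, Real.sinh_neg, neg_div_neg_eq]
  · simp [h]
  · rw [abs_of_pos h]

lemma deriv_eventually_eq {f g : ℝ → ℝ} {x : ℝ} (h : f =ᶠ[𝓝 x] g) :
    deriv f =ᶠ[𝓝 x] deriv g :=
  h.eventually_nhds.mono fun _ hy => Filter.EventuallyEq.deriv_eq hy

/-- Hadamard-type factorization of `gF`. -/
lemma exists_q (hlam : lam ≠ 0) :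
    ∃ q : ℝ → ℝ, AnalyticAt ℝ q 0 ∧
      q 0 = -(lam * (Real.cosh lam / Real.sinh lam)) / 4 ∧
      ∀ᶠ θ in 𝓝 (0 : ℝ), gF lam θ = 4 * θ ^ 2 * q θ := by
  have h0W : (0 : ℝ) ∈ W lam := mem_W_zero hlam
  have hga : AnalyticAt ℝ (gF lam) 0 :=
    ((analyticAt_aF h0W).pow 2).sub analyticAt_const
  have hWev : ∀ᶠ θ in 𝓝 (0:ℝ), θ ∈ W lam := isOpen_W.eventually_mem h0W
  have hderiv_ev : deriv (gF lam) =ᶠ[𝓝 (0:ℝ)] gd lam :=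
    hWev.mono fun θ hθ => (hasDerivAt_gF hθ).deriv
  have hXne := gd_ne hlam
  -- gF is not eventually zero
  have hne : ¬ ∀ᶠ θ in 𝓝 (0:ℝ), gF lam θ = 0 := by
    intro h
    have h0' : gd lam =ᶠ[𝓝 (0:ℝ)] fun _ => (0 : ℝ) := by
      have := deriv_eventually_eq (h : gF lam =ᶠ[𝓝 (0:ℝ)] fun _ => (0:ℝ))
      filter_upwards [hderiv_ev, this] with θ h1 h2
      rw [← h1, h2, deriv_const]
    have hgd0 : HasDerivAt (gd lam) (-2 * Real.cosh lam * (|lam| / Real.sinh |lam|)) 0 :=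
      hasDerivAt_gd hlam
    have : HasDerivAt (fun _ : ℝ => (0:ℝ)) (-2 * Real.cosh lam * (|lam| / Real.sinh |lam|)) 0 :=
      (Filter.EventuallyEq.hasDerivAt_iff h0').mp hgd0
    exact hXne (this.unique (hasDerivAt_const 0 0))
  obtain ⟨m, G, hGa, hG0, hGeq⟩ := (hga.exists_eventuallyEq_pow_smul_nonzero_iff).mpr hne
  simp only [sub_zero, smul_eq_mul] at hGeq
  -- gF has derivative 0 at 0
  have hgF0 : HasDerivAt (gF lam) 0 0 := by
    have := hasDerivAt_gF h0W
    simpa [gd, Real.sin_zero] using this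
  have hm0 : m ≠ 0 := by
    intro hm; subst hm
    have := hGeq.self_of_nhds
    rw [gF_zero hlam, pow_zero, one_mul] at this
    exact hG0 this.symm
  have hm1 : m ≠ 1 := by
    intro hm; subst hm
    have hderG : HasDerivAt (fun θ : ℝ => θ ^ 1 * G θ) (G 0) 0 := by
      have := (hasDerivAt_id (0:ℝ)).mul hGa.differentiableAt.hasDerivAt
      simpa [Pi.mul_def] using this
    have : HasDerivAt (fun θ : ℝ => θ ^ 1 * G θ) 0 0 := (Filter.EventuallyEq.hasDerivAt_iff hGeq).mp hgF0
    exact hG0 (hderG.unique this)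
  have hm2 : 2 ≤ m := by omega
  have hqa0 : AnalyticAt ℝ (fun θ : ℝ => θ ^ (m - 2) * G θ / 4) 0 := by
    simpa [div_eq_mul_inv, id_eq, Pi.mul_def, Pi.pow_def] using
      ((analyticAt_id.pow (m - 2)).mul hGa).mul (analyticAt_const (v := (4:ℝ)⁻¹))
  refine ⟨fun θ => θ ^ (m - 2) * G θ / 4, hqa0, ?_, ?_⟩
  · -- value at zero
    set q : ℝ → ℝ := fun θ => θ ^ (m - 2) * G θ / 4 with hq
    have hqa : AnalyticAt ℝ q 0 := hqa0
    have hqev : ∀ᶠ θ in 𝓝 (0:ℝ), gF lam θ = 4 * θ ^ 2 * q θ := by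
      filter_upwards [hGeq] with θ hθ
      rw [hθ, hq]
      have : θ ^ m = θ ^ 2 * θ ^ (m - 2) := by
        rw [← pow_add]; congr 1; omega
      rw [this]; ring
    have hq'a : AnalyticAt ℝ (deriv q) 0 := by
      have h1 : AnalyticAt ℝ (fun θ => fderiv ℝ q θ 1) 0 :=
        ((ContinuousLinearMap.apply ℝ ℝ (1:ℝ)).analyticAt _).comp hqa.fderiv
      exact h1.congr (Filter.Eventually.of_forall fun θ => fderiv_apply_one_eq_deriv)
    have hq_ev_diff : ∀ᶠ θ in 𝓝 (0:ℝ), HasDerivAt q (deriv q θ) θ :=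
      hqa.eventually_analyticAt.mono fun θ h => h.differentiableAt.hasDerivAt
    have heq2 : gd lam =ᶠ[𝓝 (0:ℝ)] fun θ => 8 * θ * q θ + 4 * θ ^ 2 * deriv q θ := by
      have hd2 := deriv_eventually_eq (hqev : gF lam =ᶠ[𝓝 (0:ℝ)] fun θ => 4 * θ ^ 2 * q θ)
      filter_upwards [hderiv_ev, hd2, hq_ev_diff] with θ h1 h2 h3
      rw [← h1, h2]
      have : HasDerivAt (fun θ : ℝ => 4 * θ ^ 2 * q θ)
          (8 * θ * q θ + 4 * θ ^ 2 * deriv q θ) θ := by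
        have h4 : HasDerivAt (fun θ : ℝ => 4 * θ ^ 2) (8 * θ) θ := by
          have := (hasDerivAt_pow 2 θ).const_mul (4:ℝ)
          simpa using this.congr_deriv (by ring)
        exact (h4.mul h3).congr_deriv (by ring)
      exact this.deriv
    have hL : HasDerivAt (gd lam) (-2 * Real.cosh lam * (|lam| / Real.sinh |lam|)) 0 :=
      hasDerivAt_gd hlam
    have hR : HasDerivAt (fun θ => 8 * θ * q θ + 4 * θ ^ 2 * deriv q θ) (8 * q 0) 0 := by
      have h1 : HasDerivAt (fun θ : ℝ => 8 * θ * q θ) (8 * q 0) 0 := by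
        have h8 : HasDerivAt (fun θ : ℝ => 8 * θ) 8 (0:ℝ) := by
          simpa using (hasDerivAt_id (0:ℝ)).const_mul (8:ℝ)
        have := h8.mul hqa.differentiableAt.hasDerivAt
        simpa [Pi.mul_def] using this.congr_deriv (by ring)
      have h2 : HasDerivAt (fun θ : ℝ => 4 * θ ^ 2 * deriv q θ) 0 0 := by
        have h4 : HasDerivAt (fun θ : ℝ => 4 * θ ^ 2) 0 (0:ℝ) := by
          have := (hasDerivAt_pow 2 (0:ℝ)).const_mul (4:ℝ)
          simpa using this.congr_deriv (by ring)
        have := h4.mul hq'a.differentiableAt.hasDerivAt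
        simpa [Pi.mul_def] using this.congr_deriv (by ring)
      simpa [Pi.add_def] using h1.add h2
    have hLR : HasDerivAt (fun θ => 8 * θ * q θ + 4 * θ ^ 2 * deriv q θ)
        (-2 * Real.cosh lam * (|lam| / Real.sinh |lam|)) 0 := (Filter.EventuallyEq.hasDerivAt_iff heq2).mp hL
    have h8q : 8 * q 0 = -2 * Real.cosh lam * (|lam| / Real.sinh |lam|) := hR.unique hLR
    have habs : |lam| / Real.sinh |lam| = lam / Real.sinh lam := abs_div_sinh
    rw [habs] at h8q
    have : q 0 = -(lam * (Real.cosh lam / Real.sinh lam)) / 4 := by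
      field_simp at h8q ⊢
      nlinarith [h8q]
    exact this
  · filter_upwards [hGeq] with θ hθ
    rw [hθ]
    have : θ ^ m = θ ^ 2 * θ ^ (m - 2) := by
      rw [← pow_add]; congr 1; omega
    rw [this]; ring


/-- Domain for `Hb`: second coordinate positive. -/
def Ua : Set (ℝ × ℝ) := {p | 0 < p.2}

lemma isOpen_Ua : IsOpen Ua := isOpen_lt continuous_const continuous_snd

/-- Rescaled coefficient functions for the `x`-derivatives of `Q2`. -/
def Hb : ℕ → ℝ × ℝ → ℝ
  | 0 => fun p => p.2 / Real.sinh p.2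
  | k + 1 => fun p =>
      (p.2 / 2 * Hb k p + p.1 * fderiv ℝ (Hb k) p (0, 1)) / Real.sinh p.2

lemma contDiffOn_Hb (k : ℕ) : ContDiffOn ℝ (⊤ : ℕ∞) (Hb k) Ua := by
  induction k with
  | zero =>
    exact ContDiffOn.div contDiff_snd.contDiffOn
      (Real.contDiff_sinh.comp contDiff_snd).contDiffOn
      (fun p hp => (Real.sinh_pos_iff.2 hp).ne')
  | succ k ih =>
    have htop : ((⊤ : ℕ∞) : WithTop ℕ∞) + 1 ≤ ((⊤ : ℕ∞) : WithTop ℕ∞) := by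
      norm_cast
    have hf : ContDiffOn ℝ (⊤ : ℕ∞) (fun p : ℝ × ℝ => fderiv ℝ (Hb k) p (0, 1)) Ua :=
      (ih.fderiv_of_isOpen isOpen_Ua htop).clm_apply contDiffOn_const
    refine ContDiffOn.div ?_ (Real.contDiff_sinh.comp contDiff_snd).contDiffOn
      (fun p hp => (Real.sinh_pos_iff.2 hp).ne')
    exact ((contDiff_snd.div_const 2).contDiffOn.mul ih).add (contDiff_fst.contDiffOn.mul hf)

lemma Hb_zero (k : ℕ) {a : ℝ} (ha : a ≠ 0) :
    Hb k (0, a) = (a / (2 * Real.sinh a)) ^ k * (a / Real.sinh a) := by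
  have hs : Real.sinh a ≠ 0 := Real.sinh_ne_zero.2 ha
  induction k with
  | zero => simp [Hb]
  | succ k ih =>
    show (a / 2 * Hb k (0, a) + 0 * _) / Real.sinh a = _
    rw [zero_mul, add_zero, ih, pow_succ]
    field_simp

lemma iteratedDeriv_Q2 (k : ℕ) {t : ℝ} (ht : 0 < t) :
    ∀ {x : ℝ}, 1 < x →
      iteratedDeriv k (Q2 t) x
        = Real.exp (arccosh x ^ 2 / (4 * t)) * (t ^ k)⁻¹ * Hb k (t, arccosh x) := by
  induction k with
  | zero =>
    intro x hx
    rw [iteratedDeriv_zero]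
    show (arccosh x / Real.sqrt (x ^ 2 - 1)) * Real.exp ((arccosh x) ^ 2 / (4 * t)) = _
    rw [← sinh_arccosh hx]
    show _ = _ * (t ^ 0)⁻¹ * (arccosh x / Real.sinh (arccosh x))
    rw [pow_zero, inv_one]
    ring
  | succ k ih =>
    intro x hx
    rw [iteratedDeriv_succ]
    have hev : iteratedDeriv k (Q2 t)
        =ᶠ[𝓝 x] fun y => Real.exp (arccosh y ^ 2 / (4 * t)) * (t ^ k)⁻¹ * Hb k (t, arccosh y) :=
      (eventually_gt_nhds hx).mono fun y hy => ih hy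
    rw [Filter.EventuallyEq.deriv_eq hev]
    have ha : 0 < arccosh x := arccosh_pos hx
    have hsa : 0 < Real.sqrt (x ^ 2 - 1) := sqrt_pos' hx
    have h1 : HasDerivAt arccosh (Real.sqrt (x ^ 2 - 1))⁻¹ x := hasDerivAt_arccosh hx
    have h2 : HasDerivAt (fun y => Real.exp (arccosh y ^ 2 / (4 * t)))
        (Real.exp (arccosh x ^ 2 / (4 * t))
          * (2 * arccosh x * (Real.sqrt (x ^ 2 - 1))⁻¹ / (4 * t))) x := by
      have h := (((h1.pow 2).div_const (4 * t)).exp)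
      apply h.congr_deriv
      push_cast
      rw [pow_one]
      rfl
    have hdiff : DifferentiableAt ℝ (Hb k) (t, arccosh x) := by
      have h1le : (1 : WithTop ℕ∞) ≤ ((⊤ : ℕ∞) : WithTop ℕ∞) := by norm_cast
      exact ((contDiffOn_Hb k).contDiffAt (isOpen_Ua.mem_nhds ha)).differentiableAt (by simp)
    have h3 : HasDerivAt (fun y => Hb k (t, arccosh y))
        ((Real.sqrt (x ^ 2 - 1))⁻¹ * fderiv ℝ (Hb k) (t, arccosh x) (0, 1)) x := by
      have hin : HasDerivAt (fun y : ℝ => ((t : ℝ), arccosh y))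
          ((0 : ℝ), (Real.sqrt (x ^ 2 - 1))⁻¹) x := (hasDerivAt_const x t).prodMk h1
      have h := hdiff.hasFDerivAt.comp_hasDerivAt x hin
      apply h.congr_deriv
      have hsmul : ((0 : ℝ), (Real.sqrt (x ^ 2 - 1))⁻¹)
          = (Real.sqrt (x ^ 2 - 1))⁻¹ • ((0 : ℝ), (1 : ℝ)) := by
        simp
      rw [hsmul, ContinuousLinearMap.map_smul, smul_eq_mul]
    have h4 := h2.mul (h3.const_mul ((t ^ k)⁻¹))
    have hfe : (fun y => Real.exp (arccosh y ^ 2 / (4 * t)) * (t ^ k)⁻¹ * Hb k (t, arccosh y))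
        = fun y => Real.exp (arccosh y ^ 2 / (4 * t)) * ((t ^ k)⁻¹ * Hb k (t, arccosh y)) := by
      funext y; ring
    rw [hfe]
    rw [HasDerivAt.deriv (f := fun y => Real.exp (arccosh y ^ 2 / (4 * t)) * ((t ^ k)⁻¹ * Hb k (t, arccosh y))) h4]
    show _ = _ * (t ^ (k+1))⁻¹ * Hb (k+1) (t, arccosh x)
    rw [show Hb (k+1) (t, arccosh x) = (arccosh x / 2 * Hb k (t, arccosh x)
        + t * fderiv ℝ (Hb k) (t, arccosh x) (0, 1)) / Real.sinh (arccosh x) from rfl]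
    rw [sinh_arccosh hx]
    have hts : (t : ℝ) ≠ 0 := ht.ne'
    have hss : Real.sqrt (x ^ 2 - 1) ≠ 0 := hsa.ne'
    field_simp
    ring


/-- Iterated partial derivative in the second variable. -/
def pdIter (F : ℝ × ℝ → ℝ) : ℕ → ℝ × ℝ → ℝ
  | 0 => F
  | n + 1 => fun p => fderiv ℝ (pdIter F n) p (0, 1)

variable {F : ℝ × ℝ → ℝ} {U : Set (ℝ × ℝ)}

lemma contDiffOn_pdIter (hU : IsOpen U) (hF : ContDiffOn ℝ (⊤ : ℕ∞) F U) :
    ∀ n, ContDiffOn ℝ (⊤ : ℕ∞) (pdIter F n) U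
  | 0 => hF
  | n + 1 => by
    have htop : ((⊤ : ℕ∞) : WithTop ℕ∞) + 1 ≤ ((⊤ : ℕ∞) : WithTop ℕ∞) := by norm_cast
    exact ((contDiffOn_pdIter hU hF n).fderiv_of_isOpen hU htop).clm_apply contDiffOn_const

lemma pdIter_spec (hU : IsOpen U) (hF : ContDiffOn ℝ (⊤ : ℕ∞) F U) :
    ∀ n, ∀ p ∈ U, iteratedDeriv n (fun r => F (p.1, r)) p.2 = pdIter F n p := by
  intro n
  induction n with
  | zero => intro p hp; simp [pdIter, iteratedDeriv_zero]
  | succ n ih =>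
    intro p hp
    rw [iteratedDeriv_succ]
    have hcont : Continuous (fun r : ℝ => (p.1, r)) := by fun_prop
    have hmem : ∀ᶠ r in 𝓝 p.2, (p.1, r) ∈ U := by
      have : U ∈ 𝓝 (p.1, p.2) := by rw [Prod.mk.eta]; exact hU.mem_nhds hp
      exact hcont.continuousAt.preimage_mem_nhds this
    have hev : (fun r => iteratedDeriv n (fun r' => F (p.1, r')) r)
        =ᶠ[𝓝 p.2] fun r => pdIter F n (p.1, r) :=
      hmem.mono fun r hr => ih (p.1, r) hr
    rw [Filter.EventuallyEq.deriv_eq hev]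
    have h1le : (1 : WithTop ℕ∞) ≤ ((⊤ : ℕ∞) : WithTop ℕ∞) := by norm_cast
    have hdiff : DifferentiableAt ℝ (pdIter F n) p :=
      ((contDiffOn_pdIter hU hF n).contDiffAt (hU.mem_nhds hp)).differentiableAt (by simp)
    have hin : HasDerivAt (fun r : ℝ => (p.1, r)) ((0 : ℝ), (1 : ℝ)) p.2 :=
      (hasDerivAt_const p.2 p.1).prodMk (hasDerivAt_id p.2)
    have h := HasFDerivAt.comp_hasDerivAt (l := pdIter F n) p.2
      (by rw [Prod.mk.eta]; exact hdiff.hasFDerivAt) hin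
    have h' : HasDerivAt (fun r : ℝ => pdIter F n (p.1, r))
        (fderiv ℝ (pdIter F n) p (0, 1)) p.2 := h
    rw [h'.deriv]
    rfl

lemma continuousOn_pdIter (hU : IsOpen U) (hF : ContDiffOn ℝ (⊤ : ℕ∞) F U) (n : ℕ) :
    ContinuousOn (pdIter F n) U :=
  (contDiffOn_pdIter hU hF n).continuousOn

lemma iteratedDeriv_congr_nhds {f g : ℝ → ℝ} (n : ℕ) :
    ∀ {x : ℝ}, f =ᶠ[𝓝 x] g → iteratedDeriv n f x = iteratedDeriv n g x := by
  induction n with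
  | zero => intro x h; simpa using h.self_of_nhds
  | succ n ih =>
    intro x h
    rw [iteratedDeriv_succ, iteratedDeriv_succ]
    have hev : iteratedDeriv n f =ᶠ[𝓝 x] iteratedDeriv n g :=
      h.eventually_nhds.mono fun y hy => ih hy
    exact Filter.EventuallyEq.deriv_eq hev

lemma iteratedDeriv_const_mul' (c : ℝ) (f : ℝ → ℝ) (n : ℕ) (x : ℝ) :
    iteratedDeriv n (fun y => c * f y) x = c * iteratedDeriv n f x := by
  induction n generalizing x with
  | zero => simp
  | succ n ih =>
    rw [iteratedDeriv_succ, iteratedDeriv_succ]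
    have : iteratedDeriv n (fun y => c * f y) = fun y => c * iteratedDeriv n f y :=
      funext fun y => ih y
    rw [this, deriv_const_mul_field]


lemma pdIter_spec' {F : ℝ × ℝ → ℝ} {U : Set (ℝ × ℝ)} (hU : IsOpen U)
    (hF : ContDiffOn ℝ (⊤ : ℕ∞) F U) (n : ℕ) (s y : ℝ) (h : (s, y) ∈ U) :
    iteratedDeriv n (fun r => F (s, r)) y = pdIter F n (s, y) :=
  pdIter_spec hU hF n (s, y) h
end S4

/-- Proposition `p.drq2`: for `d ≥ 1`, `0 ≤ k ≤ d−1`, `r ≥ 0`, `λ ≠ 0`,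
`lim_{t↓0} t^{d−1} e^{−λ²/(4t)} ∂ⁿ/∂rⁿ [Q₂^{(k)}(t, cos(√t r)·cosh λ)]` equals `0` if
`k < d−1`, and equals `2(λ/(2 sinh λ))^d ∂ⁿ/∂rⁿ e^{−r²λ coth λ/4}` if `k = d−1`. -/
theorem statement4 (d k n : ℕ) (hd : 1 ≤ d) (hk : k ≤ d - 1) (r lam : ℝ)
    (hr : 0 ≤ r) (hlam : lam ≠ 0) :
    Tendsto
      (fun t : ℝ => t ^ (d - 1) * Real.exp (-lam ^ 2 / (4 * t)) *
        iteratedDeriv n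
          (fun r : ℝ =>
            iteratedDeriv k (fun x => Q2 t x) (Real.cos (Real.sqrt t * r) * Real.cosh lam)) r)
      (nhdsWithin 0 (Set.Ioi 0))
      (nhds (if k < d - 1 then 0
        else 2 * (lam / (2 * Real.sinh lam)) ^ d *
          iteratedDeriv n
            (fun r : ℝ =>
              Real.exp (-(r ^ 2 * lam * (Real.cosh lam / Real.sinh lam)) / 4)) r)) := by
  classical
  obtain ⟨q, hqa, hq0, hqev⟩ := S4.exists_q hlam
  have h0W : (0:ℝ) ∈ S4.W lam := S4.mem_W_zero hlam
  have hWev : ∀ᶠ θ in 𝓝 (0:ℝ), θ ∈ S4.W lam := S4.isOpen_W.eventually_mem h0W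
  have hqanev : ∀ᶠ θ in 𝓝 (0:ℝ), AnalyticAt ℝ q θ := hqa.eventually_analyticAt
  obtain ⟨δ, hδpos, hball⟩ := Metric.eventually_nhds_iff.mp ((hWev.and hqev).and hqanev)
  have hbase : ∀ θ : ℝ, |θ| < δ →
      (θ ∈ S4.W lam ∧ S4.gF lam θ = 4 * θ ^ 2 * q θ) ∧ AnalyticAt ℝ q θ := by
    intro θ hθ
    exact hball (by simpa [Real.dist_0_eq_abs] using hθ)
  set U : Set (ℝ × ℝ) := {p : ℝ × ℝ | |p.1 * p.2| < δ} with hUdef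
  have hUopen : IsOpen U := isOpen_lt (by fun_prop) continuous_const
  set Φ : ℝ × ℝ → ℝ := fun p =>
    Real.exp (p.2 ^ 2 * q (p.1 * p.2)) * S4.Hb k (p.1 ^ 2, S4.aF lam (p.1 * p.2)) with hΦdef
  -- smoothness of Φ on U
  have hmul : ContDiff ℝ (⊤:ℕ∞) (fun p : ℝ × ℝ => p.1 * p.2) := contDiff_fst.mul contDiff_snd
  have hmapsTo1 : MapsTo (fun p : ℝ × ℝ => p.1 * p.2) U (Metric.ball (0:ℝ) δ) := by
    intro p hp
    rw [Metric.mem_ball, Real.dist_0_eq_abs]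
    exact hp
  have hqOn : ContDiffOn ℝ (⊤:ℕ∞) q (Metric.ball (0:ℝ) δ) := fun θ hθ =>
    ((hbase θ (by simpa [Metric.mem_ball, Real.dist_0_eq_abs] using hθ)).2.contDiffAt).contDiffWithinAt
  have haOn : ContDiffOn ℝ (⊤:ℕ∞) (S4.aF lam) (Metric.ball (0:ℝ) δ) := fun θ hθ =>
    ((S4.analyticAt_aF
      (hbase θ (by simpa [Metric.mem_ball, Real.dist_0_eq_abs] using hθ)).1.1).contDiffAt).contDiffWithinAt
  have hpart1 : ContDiffOn ℝ (⊤:ℕ∞) (fun p : ℝ×ℝ => Real.exp (p.2^2 * q (p.1*p.2))) U := by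
    apply ContDiff.comp_contDiffOn Real.contDiff_exp
    exact (contDiff_snd.pow 2).contDiffOn.mul (hqOn.comp hmul.contDiffOn hmapsTo1)
  have hinner2 : ContDiffOn ℝ (⊤:ℕ∞) (fun p : ℝ×ℝ => ((p.1^2 : ℝ), S4.aF lam (p.1*p.2))) U :=
    (contDiff_fst.pow 2).contDiffOn.prodMk (haOn.comp hmul.contDiffOn hmapsTo1)
  have hmapsTo2 : MapsTo (fun p : ℝ×ℝ => ((p.1^2 : ℝ), S4.aF lam (p.1*p.2))) U S4.Ua := by
    intro p hp
    exact S4.aF_pos (hbase _ hp).1.1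
  have hΦ : ContDiffOn ℝ (⊤:ℕ∞) Φ U :=
    hpart1.mul ((S4.contDiffOn_Hb k).comp hinner2 hmapsTo2)
  -- value at s = 0
  have hlH : |lam| ≠ 0 := abs_ne_zero.2 hlam
  set Cst : ℝ := (|lam| / (2 * Real.sinh |lam|)) ^ k * (|lam| / Real.sinh |lam|) with hCst
  have hΦ0 : ∀ r' : ℝ, Φ (0, r')
      = Cst * Real.exp (-(r' ^ 2 * lam * (Real.cosh lam / Real.sinh lam)) / 4) := by
    intro r'
    show Real.exp (r' ^ 2 * q ((0:ℝ) * r')) * S4.Hb k ((0:ℝ) ^ 2, S4.aF lam ((0:ℝ) * r')) = _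
    rw [zero_mul, S4.aF_zero hlam, hq0, show ((0:ℝ) ^ 2 : ℝ) = 0 by norm_num,
      S4.Hb_zero k hlH,
      show r' ^ 2 * (-(lam * (Real.cosh lam / Real.sinh lam)) / 4)
        = -(r' ^ 2 * lam * (Real.cosh lam / Real.sinh lam)) / 4 by ring]
    ring
  have h0rU : ∀ r' : ℝ, ((0:ℝ), r') ∈ U := by
    intro r'
    show |(0:ℝ) * r'| < δ
    simpa using hδpos
  have hcontAt : ContinuousAt (S4.pdIter Φ n) (0, r) :=
    (S4.continuousOn_pdIter hUopen hΦ n).continuousAt (hUopen.mem_nhds (h0rU r))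
  have htends1 : Tendsto (fun t : ℝ => (Real.sqrt t, r)) (𝓝[>] (0:ℝ)) (𝓝 ((0:ℝ), r)) := by
    have hc : ContinuousAt (fun t : ℝ => (Real.sqrt t, r)) 0 := by fun_prop
    have h := hc.tendsto
    rw [Real.sqrt_zero] at h
    exact h.mono_left nhdsWithin_le_nhds
  have hmain2 : Tendsto (fun t : ℝ => S4.pdIter Φ n (Real.sqrt t, r)) (𝓝[>] (0:ℝ))
      (𝓝 (S4.pdIter Φ n (0, r))) := hcontAt.tendsto.comp htends1
  -- eventual identification
  have hrpos : (0:ℝ) < |r| + 1 := by positivity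
  set ε : ℝ := (δ / (|r| + 1)) ^ 2 with hεdef
  have hεpos : 0 < ε := by positivity
  have hEq : ∀ᶠ t in 𝓝[>] (0:ℝ),
      t ^ (d - 1) * Real.exp (-lam ^ 2 / (4 * t)) *
        iteratedDeriv n
          (fun r' : ℝ =>
            iteratedDeriv k (fun x => Q2 t x) (Real.cos (Real.sqrt t * r') * Real.cosh lam)) r
      = t ^ (d - 1 - k) * S4.pdIter Φ n (Real.sqrt t, r) := by
    filter_upwards [Ioo_mem_nhdsGT hεpos] with t ht
    obtain ⟨ht0, htε⟩ := ht
    have hsqt : 0 < Real.sqrt t := Real.sqrt_pos.2 ht0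
    have hst : Real.sqrt t < δ / (|r| + 1) := by
      have h1 : Real.sqrt t < Real.sqrt ε := Real.sqrt_lt_sqrt ht0.le htε
      rwa [hεdef, Real.sqrt_sq (by positivity)] at h1
    have hst2 : Real.sqrt t * (|r| + 1) < δ := (lt_div_iff₀ hrpos).mp hst
    have hbound : ∀ r' : ℝ, |r'| < |r| + 1 → |Real.sqrt t * r'| < δ := by
      intro r' hr'
      rw [abs_mul, abs_of_nonneg (Real.sqrt_nonneg t)]
      calc Real.sqrt t * |r'| < Real.sqrt t * (|r| + 1) :=
            mul_lt_mul_of_pos_left hr' hsqt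
        _ < δ := hst2
    have hkey : ∀ r' : ℝ, |r' - r| < 1 →
        iteratedDeriv k (fun x => Q2 t x) (Real.cos (Real.sqrt t * r') * Real.cosh lam)
        = ((t ^ k)⁻¹ * Real.exp (lam ^ 2 / (4 * t))) * Φ (Real.sqrt t, r') := by
      intro r' hr'
      have hr'b : |r'| < |r| + 1 := by
        have h1 : |r'| ≤ |r' - r| + |r| := by
          calc |r'| = |(r' - r) + r| := by ring_nf
            _ ≤ |r' - r| + |r| := abs_add_le _ _
        linarith
      have hθ : |Real.sqrt t * r'| < δ := hbound r' hr'b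
      obtain ⟨⟨hW', hgq⟩, -⟩ := hbase _ hθ
      have hx : 1 < Real.cos (Real.sqrt t * r') * Real.cosh lam := hW'
      rw [S4.iteratedDeriv_Q2 k ht0 hx]
      have hsq : Real.sqrt t ^ 2 = t := Real.sq_sqrt ht0.le
      have hexp : arccosh (Real.cos (Real.sqrt t * r') * Real.cosh lam) ^ 2 / (4 * t)
          = lam ^ 2 / (4 * t) + r' ^ 2 * q (Real.sqrt t * r') := by
        have h1 : arccosh (Real.cos (Real.sqrt t * r') * Real.cosh lam) ^ 2
            = S4.gF lam (Real.sqrt t * r') + lam ^ 2 := by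
          rw [S4.gF, S4.aF]; ring
        rw [h1, hgq, show (Real.sqrt t * r') ^ 2 = t * r' ^ 2 by rw [mul_pow, hsq]]
        field_simp
        ring
      rw [hexp, Real.exp_add]
      show _ = _ * (Real.exp (r' ^ 2 * q (Real.sqrt t * r'))
        * S4.Hb k (Real.sqrt t ^ 2, S4.aF lam (Real.sqrt t * r')))
      rw [hsq]
      show Real.exp (lam ^ 2 / (4*t)) * Real.exp (r' ^ 2 * q (Real.sqrt t * r')) * (t ^ k)⁻¹
          * S4.Hb k (t, S4.aF lam (Real.sqrt t * r')) = _
      ring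
    have hev : (fun r' : ℝ => iteratedDeriv k (fun x => Q2 t x)
          (Real.cos (Real.sqrt t * r') * Real.cosh lam))
        =ᶠ[𝓝 r] fun r' => ((t ^ k)⁻¹ * Real.exp (lam ^ 2 / (4 * t))) * Φ (Real.sqrt t, r') := by
      filter_upwards [Metric.ball_mem_nhds r one_pos] with r' hr'
      exact hkey r' (by simpa [Real.dist_eq] using hr')
    rw [S4.iteratedDeriv_congr_nhds n hev, S4.iteratedDeriv_const_mul']
    have hmemU : (Real.sqrt t, r) ∈ U := by
      show |Real.sqrt t * r| < δ
      exact hbound r (by linarith [abs_nonneg r])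
    rw [S4.pdIter_spec' hUopen hΦ n (Real.sqrt t) r hmemU]
    have h1 : Real.exp (-lam ^ 2 / (4 * t)) * Real.exp (lam ^ 2 / (4 * t)) = 1 := by
      rw [← Real.exp_add, show -lam ^ 2 / (4 * t) + lam ^ 2 / (4 * t) = 0 by ring,
        Real.exp_zero]
    have h2 : t ^ (d - 1) * (t ^ k)⁻¹ = t ^ (d - 1 - k) := by
      rw [show t ^ (d-1) = t ^ (d-1-k) * t ^ k by rw [← pow_add, Nat.sub_add_cancel hk],
        mul_assoc, mul_inv_cancel₀ (pow_ne_zero k ht0.ne'), mul_one]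
    calc t ^ (d-1) * Real.exp (-lam ^ 2/(4*t))
          * ((t ^ k)⁻¹ * Real.exp (lam ^ 2/(4*t)) * S4.pdIter Φ n (Real.sqrt t, r))
        = (t ^ (d-1) * (t ^ k)⁻¹) * (Real.exp (-lam ^ 2/(4*t)) * Real.exp (lam ^ 2/(4*t)))
            * S4.pdIter Φ n (Real.sqrt t, r) := by ring
      _ = t ^ (d-1-k) * S4.pdIter Φ n (Real.sqrt t, r) := by rw [h1, h2, mul_one]
  have hEq' : (fun t : ℝ => t ^ (d - 1 - k) * S4.pdIter Φ n (Real.sqrt t, r))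
      =ᶠ[𝓝[>] (0:ℝ)]
      (fun t : ℝ => t ^ (d - 1) * Real.exp (-lam ^ 2 / (4 * t)) *
        iteratedDeriv n
          (fun r' : ℝ =>
            iteratedDeriv k (fun x => Q2 t x) (Real.cos (Real.sqrt t * r') * Real.cosh lam)) r) :=
    hEq.mono fun t ht => ht.symm
  refine Tendsto.congr' hEq' ?_
  by_cases hlt : k < d - 1
  · rw [if_pos hlt]
    have hpow : Tendsto (fun t : ℝ => t ^ (d-1-k)) (𝓝[>] (0:ℝ)) (𝓝 0) := by
      have hc : ContinuousAt (fun t : ℝ => t ^ (d-1-k)) 0 := by fun_prop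
      have h := hc.tendsto
      rw [zero_pow (show d-1-k ≠ 0 by omega)] at h
      exact h.mono_left nhdsWithin_le_nhds
    have := hpow.mul hmain2
    simpa using this
  · rw [if_neg hlt]
    have hkd : k = d - 1 := le_antisymm hk (not_lt.1 hlt)
    have hd1 : d = k + 1 := by omega
    have hzero : d - 1 - k = 0 := by omega
    have hval : S4.pdIter Φ n (0, r)
        = 2 * (lam / (2 * Real.sinh lam)) ^ d *
          iteratedDeriv n
            (fun r' : ℝ =>
              Real.exp (-(r' ^ 2 * lam * (Real.cosh lam / Real.sinh lam)) / 4)) r := by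
      rw [← S4.pdIter_spec' hUopen hΦ n 0 r (h0rU r)]
      rw [show (fun r' : ℝ => Φ (0, r'))
          = fun r' : ℝ => Cst * Real.exp (-(r' ^ 2 * lam * (Real.cosh lam / Real.sinh lam)) / 4)
          from funext hΦ0,
        S4.iteratedDeriv_const_mul']
      have hC : Cst = 2 * (lam / (2 * Real.sinh lam)) ^ d := by
        rw [hCst, hd1,
          show |lam| / (2 * Real.sinh |lam|) = (|lam| / Real.sinh |lam|) / 2 by ring,
          S4.abs_div_sinh,
          show lam / (2 * Real.sinh lam) = (lam / Real.sinh lam) / 2 by ring]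
        ring
      rw [hC]
    have h' := hmain2
    rw [hval] at h'
    simpa [hzero] using h'
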